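/- Let F be a real 2×2 matrix and G a real 2×2 upper triangular matrix such that det(F + λG) = 0 for some real λ. Then there exist 2×2 real orthogonal matrices Q and Z such that Q F Z and Q G Z are both upper triangular. -/

import Mathlib

open Matrix

private lemma rot_orth (c a b : ℝ) (h : c ^ 2 * (a ^ 2 + b ^ 2) = 1) :
    (c • !![a, -b; b, a])ᵀ * (c • !![a, -b; b, a]) = 1 ∧
    (c • !![a, -b; b, a]) * (c • !![a, -b; b, a])ᵀ = 1 := by
  have h1 : (c • !![a, -b; b, a]) = !![c*a, -(c*b); c*b, c*a] := by
    ext i j; fin_cases i <;> fin_cases j <;> simp [mul_comm] <;> ring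
  have h2 : (!![c*a, -(c*b); c*b, c*a])ᵀ = !![c*a, c*b; -(c*b), c*a] := by
    ext i j; fin_cases i <;> fin_cases j <;> rfl
  rw [h1, h2, Matrix.mul_fin_two, Matrix.mul_fin_two, Matrix.one_fin_two]
  constructor <;>
  · ext i j
    fin_cases i <;> fin_cases j <;> simp <;> nlinarith

private lemma main_lem (F G : Matrix (Fin 2) (Fin 2) ℝ) (hG : G 1 0 = 0) (lam : ℝ)
    (z : Fin 2 → ℝ) (hz : z 0 ^ 2 + z 1 ^ 2 ≠ 0)
    (hker : (F + lam • G).mulVec z = 0) :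
    ∃ Q Z : Matrix (Fin 2) (Fin 2) ℝ,
      Qᵀ * Q = 1 ∧ Q * Qᵀ = 1 ∧ Zᵀ * Z = 1 ∧ Z * Zᵀ = 1 ∧
      (Q * F * Z) 1 0 = 0 ∧ (Q * G * Z) 1 0 = 0 := by
  have hzpos : 0 < z 0 ^ 2 + z 1 ^ 2 := lt_of_le_of_ne (by positivity) (Ne.symm hz)
  set n : ℝ := Real.sqrt (z 0 ^ 2 + z 1 ^ 2) with hn
  have hn2 : n ^ 2 = z 0 ^ 2 + z 1 ^ 2 := Real.sq_sqrt (by positivity)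
  have hnpos : 0 < n := Real.sqrt_pos.mpr hzpos
  set Z : Matrix (Fin 2) (Fin 2) ℝ := n⁻¹ • !![z 0, -(z 1); z 1, z 0] with hZ
  obtain ⟨hZ1, hZ2⟩ := rot_orth n⁻¹ (z 0) (z 1) (by
    rw [inv_pow]; field_simp [hn2]; linarith [hn2])
  -- kernel equations componentwise
  have hk0 : F 0 0 * z 0 + F 0 1 * z 1 + lam * (G 0 0 * z 0 + G 0 1 * z 1) = 0 := by
    have := congrFun hker 0
    simp [Matrix.mulVec, dotProduct, Fin.sum_univ_two, Matrix.add_apply] at this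
    linarith
  have hk1 : F 1 0 * z 0 + F 1 1 * z 1 + lam * (G 1 1 * z 1) = 0 := by
    have := congrFun hker 1
    simp [Matrix.mulVec, dotProduct, Fin.sum_univ_two, Matrix.add_apply, hG] at this
    linarith
  obtain ⟨w0, hw0⟩ : ∃ t : ℝ, t = G 0 0 * z 0 + G 0 1 * z 1 := ⟨_, rfl⟩
  obtain ⟨w1, hw1⟩ : ∃ t : ℝ, t = G 1 1 * z 1 := ⟨_, rfl⟩
  by_cases hw : w0 ^ 2 + w1 ^ 2 = 0
  · -- w = 0, take Q = 1
    have hw0z : w0 = 0 := by nlinarith [sq_nonneg w0, sq_nonneg w1]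
    have hw1z : w1 = 0 := by nlinarith [sq_nonneg w0, sq_nonneg w1]
    refine ⟨1, Z, by simp, by simp, hZ1, hZ2, ?_, ?_⟩
    · have e : ((1 : Matrix (Fin 2) (Fin 2) ℝ) * F * Z) 1 0 = n⁻¹ * (F 1 0 * z 0 + F 1 1 * z 1) := by
        simp [hZ, Matrix.mul_apply, Matrix.smul_apply, Fin.sum_univ_two, smul_eq_mul] <;> ring
      rw [e]
      linear_combination (n⁻¹ : ℝ) * hk1 - (n⁻¹ * lam) * hw1z + (n⁻¹ * lam) * hw1
    · have e : ((1 : Matrix (Fin 2) (Fin 2) ℝ) * G * Z) 1 0 = n⁻¹ * (G 1 0 * z 0 + G 1 1 * z 1) := by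
        simp [hZ, Matrix.mul_apply, Matrix.smul_apply, Fin.sum_univ_two, smul_eq_mul] <;> ring
      rw [e]
      linear_combination (n⁻¹ * z 0) * hG + (n⁻¹ : ℝ) * hw1z - (n⁻¹ : ℝ) * hw1
  · have hwpos : 0 < w0 ^ 2 + w1 ^ 2 := lt_of_le_of_ne (by positivity) (Ne.symm hw)
    set m : ℝ := Real.sqrt (w0 ^ 2 + w1 ^ 2) with hm
    have hm2 : m ^ 2 = w0 ^ 2 + w1 ^ 2 := Real.sq_sqrt (by positivity)
    have hmpos : 0 < m := Real.sqrt_pos.mpr hwpos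
    set Q : Matrix (Fin 2) (Fin 2) ℝ := m⁻¹ • !![w0, -(-w1); -w1, w0] with hQ
    obtain ⟨hQ1, hQ2⟩ := rot_orth m⁻¹ w0 (-w1) (by
      rw [inv_pow]; field_simp [hm2]; linarith [hm2])
    refine ⟨Q, Z, hQ1, hQ2, hZ1, hZ2, ?_, ?_⟩
    · have e : (Q * F * Z) 1 0 =
          m⁻¹ * n⁻¹ * ((-w1) * (F 0 0 * z 0 + F 0 1 * z 1)
            + w0 * (F 1 0 * z 0 + F 1 1 * z 1)) := by
        simp [hQ, hZ, Matrix.smul_mul, Matrix.mul_smul, Matrix.smul_apply, Matrix.mul_apply, Matrix.vecMul, dotProduct, Fin.sum_univ_two, smul_eq_mul] <;> ring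
      rw [e]
      linear_combination (-(m⁻¹ * n⁻¹ * w1)) * hk0 + (m⁻¹ * n⁻¹ * w0) * hk1
        - (m⁻¹ * n⁻¹ * lam * w1) * hw0 + (m⁻¹ * n⁻¹ * lam * w0) * hw1
    · have e : (Q * G * Z) 1 0 =
          m⁻¹ * n⁻¹ * ((-w1) * (G 0 0 * z 0 + G 0 1 * z 1)
            + w0 * (G 1 0 * z 0 + G 1 1 * z 1)) := by
        simp [hQ, hZ, Matrix.smul_mul, Matrix.mul_smul, Matrix.smul_apply, Matrix.mul_apply, Matrix.vecMul, dotProduct, Fin.sum_univ_two, smul_eq_mul] <;> ring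
      rw [e]
      linear_combination (m⁻¹ * n⁻¹ * w1) * hw0 + (-(m⁻¹ * n⁻¹ * w0)) * hw1
        + (m⁻¹ * n⁻¹ * w0 * z 0) * hG

theorem stmt1 (F G : Matrix (Fin 2) (Fin 2) ℝ) (hG : G 1 0 = 0)
    (h : ∃ lam : ℝ, (F + lam • G).det = 0) :
    ∃ Q Z : Matrix (Fin 2) (Fin 2) ℝ,
      Qᵀ * Q = 1 ∧ Q * Qᵀ = 1 ∧ Zᵀ * Z = 1 ∧ Z * Zᵀ = 1 ∧
      (Q * F * Z) 1 0 = 0 ∧ (Q * G * Z) 1 0 = 0 := by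
  obtain ⟨lam, hdet⟩ := h
  rw [Matrix.det_fin_two] at hdet
  obtain ⟨a, ha⟩ : ∃ t : ℝ, t = F 0 0 + lam * G 0 0 := ⟨_, rfl⟩
  obtain ⟨b, hb⟩ : ∃ t : ℝ, t = F 0 1 + lam * G 0 1 := ⟨_, rfl⟩
  obtain ⟨c, hc⟩ : ∃ t : ℝ, t = F 1 0 + lam * G 1 0 := ⟨_, rfl⟩
  obtain ⟨d, hd⟩ : ∃ t : ℝ, t = F 1 1 + lam * G 1 1 := ⟨_, rfl⟩
  have hdet' : a * d - b * c = 0 := by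
    rw [ha, hb, hc, hd]
    simp only [Matrix.add_apply, Matrix.smul_apply, smul_eq_mul] at hdet
    linarith
  by_cases h1 : b = 0 ∧ a = 0
  · by_cases h2 : d = 0 ∧ c = 0
    · -- M = 0, z = ![1,0]
      refine main_lem F G hG lam ![1, 0] (by norm_num) ?_
      funext i; fin_cases i
      · simp [Matrix.mulVec, dotProduct, Fin.sum_univ_two,
          Matrix.add_apply, Matrix.smul_apply]
        linear_combination h1.2 - ha
      · simp [Matrix.mulVec, dotProduct, Fin.sum_univ_two,
          Matrix.add_apply, Matrix.smul_apply]
        linear_combination h2.2 - hc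
    · -- z = ![d, -c]
      refine main_lem F G hG lam ![d, -c] ?_ ?_
      · intro hcon
        simp at hcon
        exact h2 ⟨by nlinarith [sq_nonneg d, sq_nonneg c],
          by nlinarith [sq_nonneg d, sq_nonneg c]⟩
      · funext i; fin_cases i
        · simp [Matrix.mulVec, dotProduct, Fin.sum_univ_two,
            Matrix.add_apply, Matrix.smul_apply]
          linear_combination hdet' - d * ha + c * hb
        · simp [Matrix.mulVec, dotProduct, Fin.sum_univ_two,
            Matrix.add_apply, Matrix.smul_apply]
          linear_combination c * hd - d * hc
  · -- z = ![-b, a]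
    refine main_lem F G hG lam ![-b, a] ?_ ?_
    · intro hcon
      simp at hcon
      exact h1 ⟨by nlinarith [sq_nonneg a, sq_nonneg b],
        by nlinarith [sq_nonneg a, sq_nonneg b]⟩
    · funext i; fin_cases i
      · simp [Matrix.mulVec, dotProduct, Fin.sum_univ_two,
          Matrix.add_apply, Matrix.smul_apply]
        linear_combination b * ha - a * hb
      · simp [Matrix.mulVec, dotProduct, Fin.sum_univ_two,
          Matrix.add_apply, Matrix.smul_apply]
        linear_combination hdet' + b * hc - a * hd
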